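/- Let H : CPO → CPO be a locally continuous endofunctor of the category of ω-complete partial orders and continuous maps, and let α : HA → A be an H-algebra whose carrier has a least element ⊥. Then every flat equation morphism e : X → HX + A has a least solution e†, given as the least fixed point of the continuous map F(s) = [α, id] ∘ (Hs + id) ∘ e on CPO(X, A); equivalently e† = ⊔_{n<ω} e†_n where e†₀ is constantly ⊥ and e†_{n+1} = F(e†_n). -/

import Mathlib

open OmegaCompletePartialOrder

namespace CPOSum

variable {α β : Type} [OmegaCompletePartialOrder α] [OmegaCompletePartialOrder β]

theorem exists_inl (c : Chain (α ⊕ β)) (a₀ : α) (h : c 0 = Sum.inl a₀) (n : ℕ) :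
    ∃ a, c n = Sum.inl a := by
  have h0 : c 0 ≤ c n := c.monotone (Nat.zero_le n)
  rw [h] at h0
  cases hn : c n with
  | inl a => exact ⟨a, rfl⟩
  | inr b => rw [hn] at h0; exact absurd h0 Sum.not_inl_le_inr

theorem exists_inr (c : Chain (α ⊕ β)) (b₀ : β) (h : c 0 = Sum.inr b₀) (n : ℕ) :
    ∃ b, c n = Sum.inr b := by
  have h0 : c 0 ≤ c n := c.monotone (Nat.zero_le n)
  rw [h] at h0
  cases hn : c n with
  | inl a => rw [hn] at h0; exact absurd h0 Sum.not_inr_le_inl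
  | inr b => exact ⟨b, rfl⟩

/-- The left component of a chain in `α ⊕ β` starting in `α`. -/
def leftChain (c : Chain (α ⊕ β)) (a₀ : α) (h : c 0 = Sum.inl a₀) : Chain α where
  toFun n := ((c n).getLeft?).getD a₀
  monotone' := by
    intro m n hmn
    obtain ⟨a, ha⟩ := exists_inl c a₀ h m
    obtain ⟨b, hb⟩ := exists_inl c a₀ h n
    have hc : c m ≤ c n := c.monotone hmn
    rw [ha, hb] at hc
    simp [ha, hb, Sum.getLeft?]
    exact Sum.inl_le_inl_iff.mp hc

/-- The right component of a chain in `α ⊕ β` starting in `β`. -/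
def rightChain (c : Chain (α ⊕ β)) (b₀ : β) (h : c 0 = Sum.inr b₀) : Chain β where
  toFun n := ((c n).getRight?).getD b₀
  monotone' := by
    intro m n hmn
    obtain ⟨a, ha⟩ := exists_inr c b₀ h m
    obtain ⟨b, hb⟩ := exists_inr c b₀ h n
    have hc : c m ≤ c n := c.monotone hmn
    rw [ha, hb] at hc
    simp [ha, hb, Sum.getRight?]
    exact Sum.inr_le_inr_iff.mp hc

theorem leftChain_apply (c : Chain (α ⊕ β)) (a₀ : α) (h : c 0 = Sum.inl a₀)
    {i : ℕ} {a : α} (ha : c i = Sum.inl a) : leftChain c a₀ h i = a := by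
  show ((c i).getLeft?).getD a₀ = a
  rw [ha]
  rfl

theorem rightChain_apply (c : Chain (α ⊕ β)) (b₀ : β) (h : c 0 = Sum.inr b₀)
    {i : ℕ} {b : β} (hb : c i = Sum.inr b) : rightChain c b₀ h i = b := by
  show ((c i).getRight?).getD b₀ = b
  rw [hb]
  rfl

/-- The `ω`-complete partial order on the disjoint union `α ⊕ β`, with elements
of different summands incomparable (the coproduct in `CPO`): an `ω`-chain lies
entirely in one summand, and its supremum is computed there. -/
noncomputable instance instSumCPO : OmegaCompletePartialOrder (α ⊕ β) where
  ωSup c :=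
    match h : c 0 with
    | Sum.inl a₀ => Sum.inl (ωSup (leftChain c a₀ h))
    | Sum.inr b₀ => Sum.inr (ωSup (rightChain c b₀ h))
  le_ωSup := by
    intro c i
    split
    · rename_i a₀ h
      obtain ⟨a, ha⟩ := exists_inl c a₀ h i
      have hle := le_ωSup (leftChain c a₀ h) i
      rw [leftChain_apply c a₀ h ha] at hle
      rw [ha]
      exact Sum.inl_le_inl_iff.mpr hle
    · rename_i b₀ h
      obtain ⟨b, hb⟩ := exists_inr c b₀ h i
      have hle := le_ωSup (rightChain c b₀ h) i
      rw [rightChain_apply c b₀ h hb] at hle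
      rw [hb]
      exact Sum.inr_le_inr_iff.mpr hle
  ωSup_le := by
    intro c x hx
    split
    · rename_i a₀ h
      rcases x with ax | bx
      · refine Sum.inl_le_inl_iff.mpr (ωSup_le _ _ ?_)
        intro i
        obtain ⟨a, ha⟩ := exists_inl c a₀ h i
        have hi := hx i
        rw [ha] at hi
        rw [leftChain_apply c a₀ h ha]
        exact Sum.inl_le_inl_iff.mp hi
      · have h0 := hx 0
        rw [h] at h0
        exact absurd h0 Sum.not_inl_le_inr
    · rename_i b₀ h
      rcases x with ax | bx
      · have h0 := hx 0
        rw [h] at h0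
        exact absurd h0 Sum.not_inr_le_inl
      · refine Sum.inr_le_inr_iff.mpr (ωSup_le _ _ ?_)
        intro i
        obtain ⟨b, hb⟩ := exists_inr c b₀ h i
        have hi := hx i
        rw [hb] at hi
        rw [rightChain_apply c b₀ h hb]
        exact Sum.inr_le_inr_iff.mp hi

theorem ωSup_eq_inl (c : Chain (α ⊕ β)) (a₀ : α) (h : c 0 = Sum.inl a₀) :
    ωSup c = Sum.inl (ωSup (leftChain c a₀ h)) := by
  show (match h' : c 0 with
    | Sum.inl a₀ => Sum.inl (ωSup (leftChain c a₀ h'))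
    | Sum.inr b₀ => Sum.inr (ωSup (rightChain c b₀ h'))) = _
  split
  · rename_i a₁ h₁
    have ha : a₁ = a₀ := by
      have := h₁.symm.trans h
      exact Sum.inl_injective this
    subst ha
    rfl
  · rename_i b₁ h₁
    have := h₁.symm.trans h
    simp at this

theorem ωSup_eq_inr (c : Chain (α ⊕ β)) (b₀ : β) (h : c 0 = Sum.inr b₀) :
    ωSup c = Sum.inr (ωSup (rightChain c b₀ h)) := by
  show (match h' : c 0 with
    | Sum.inl a₀ => Sum.inl (ωSup (leftChain c a₀ h'))
    | Sum.inr b₀ => Sum.inr (ωSup (rightChain c b₀ h'))) = _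
  split
  · rename_i a₁ h₁
    have := h₁.symm.trans h
    simp at this
  · rename_i b₁ h₁
    have hb : b₁ = b₀ := by
      have := h₁.symm.trans h
      exact Sum.inr_injective this
    subst hb
    rfl

end CPOSum

/-- An object of the category `CPO` of `ω`-complete partial orders
(posets with joins of increasing `ω`-chains) and continuous maps. -/
structure CPOCat : Type 1 where
  carrier : Type
  [str : OmegaCompletePartialOrder carrier]

attribute [instance] CPOCat.str

instance : CoeSort CPOCat Type := ⟨CPOCat.carrier⟩

/-- A cpo `A` as an object of `CPO`. -/
def CPOCat.of (A : Type) [OmegaCompletePartialOrder A] : CPOCat := ⟨A⟩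

/-- The binary coproduct in `CPO`: the disjoint union with elements of
different summands incomparable. -/
@[reducible] noncomputable def CPOCat.sum (X Y : CPOCat) : CPOCat := ⟨X.carrier ⊕ Y.carrier⟩

/-- Coproduct injection `inl` as a continuous map. -/
noncomputable def cpoInl {X Y : CPOCat} : X →𝒄 CPOCat.sum X Y where
  toFun := Sum.inl
  monotone' := Sum.inl_mono
  map_ωSup' := by
    intro c
    rw [CPOSum.ωSup_eq_inl (α := X.carrier) (β := Y.carrier) (c.map (⟨Sum.inl, Sum.inl_mono⟩ : X.carrier →o X.carrier ⊕ Y.carrier)) (c 0) rfl]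
    have hch : CPOSum.leftChain (c.map (⟨Sum.inl, Sum.inl_mono⟩ : X.carrier →o X.carrier ⊕ Y.carrier)) (c 0) rfl = c := by
      apply Chain.ext
      funext n
      exact CPOSum.leftChain_apply _ (c 0) rfl (i := n) (a := c n) rfl
    rw [hch]

/-- Coproduct injection `inr` as a continuous map. -/
noncomputable def cpoInr {X Y : CPOCat} : Y →𝒄 CPOCat.sum X Y where
  toFun := Sum.inr
  monotone' := Sum.inr_mono
  map_ωSup' := by
    intro c
    rw [CPOSum.ωSup_eq_inr (α := X.carrier) (β := Y.carrier) (c.map (⟨Sum.inr, Sum.inr_mono⟩ : Y.carrier →o X.carrier ⊕ Y.carrier)) (c 0) rfl]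
    have hch : CPOSum.rightChain (c.map (⟨Sum.inr, Sum.inr_mono⟩ : Y.carrier →o X.carrier ⊕ Y.carrier)) (c 0) rfl = c := by
      apply Chain.ext
      funext n
      exact CPOSum.rightChain_apply _ (c 0) rfl (i := n) (b := c n) rfl
    rw [hch]

/-- Copairing `[f, g]` of continuous maps, as a continuous map on the coproduct. -/
noncomputable def cpoElim {X Y Z : CPOCat} (f : X →𝒄 Z) (g : Y →𝒄 Z) :
    CPOCat.sum X Y →𝒄 Z where
  toFun := Sum.elim f g
  monotone' := by
    rintro (x | x) (y | y) h
    · exact f.monotone (Sum.inl_le_inl_iff.mp h)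
    · exact absurd h Sum.not_inl_le_inr
    · exact absurd h Sum.not_inr_le_inl
    · exact g.monotone (Sum.inr_le_inr_iff.mp h)
  map_ωSup' := by
    intro c
    rcases h : c 0 with a₀ | b₀
    · rw [CPOSum.ωSup_eq_inl c a₀ h]
      show f (ωSup (CPOSum.leftChain c a₀ h)) = _
      rw [f.continuous]
      apply congrArg
      apply Chain.ext
      funext n
      obtain ⟨a, ha⟩ := CPOSum.exists_inl c a₀ h n
      show f (CPOSum.leftChain c a₀ h n) = Sum.elim f g (c n)
      rw [CPOSum.leftChain_apply c a₀ h ha, ha]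
      rfl
    · rw [CPOSum.ωSup_eq_inr c b₀ h]
      show g (ωSup (CPOSum.rightChain c b₀ h)) = _
      rw [g.continuous]
      apply congrArg
      apply Chain.ext
      funext n
      obtain ⟨b, hb⟩ := CPOSum.exists_inr c b₀ h n
      show g (CPOSum.rightChain c b₀ h n) = Sum.elim f g (c n)
      rw [CPOSum.rightChain_apply c b₀ h hb, hb]
      rfl

/-- `f + g` on coproducts, as a continuous map. -/
noncomputable def cpoSumMap {X X' Y Y' : CPOCat} (f : X →𝒄 X') (g : Y →𝒄 Y') :
    CPOCat.sum X Y →𝒄 CPOCat.sum X' Y' :=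
  cpoElim (cpoInl.comp f) (cpoInr.comp g)

open OmegaCompletePartialOrder.ContinuousHom in
/-- A locally continuous endofunctor of `CPO`: the action on hom-cpos
`CPO(X, Y) → CPO(HX, HY)` is continuous (monotone and preserving suprema of
`ω`-chains of continuous maps). -/
structure CPOFunctor : Type 1 where
  obj : CPOCat → CPOCat
  map : ∀ {X Y : CPOCat}, (X →𝒄 Y) → (obj X →𝒄 obj Y)
  map_id : ∀ X : CPOCat, map (ContinuousHom.id : X →𝒄 X) = ContinuousHom.id
  map_comp : ∀ {X Y Z : CPOCat} (f : X →𝒄 Y) (g : Y →𝒄 Z),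
    map (g.comp f) = (map g).comp (map f)
  mono : ∀ {X Y : CPOCat} (f g : X →𝒄 Y), f ≤ g → map f ≤ map g
  cont : ∀ {X Y : CPOCat} (c : Chain (X →𝒄 Y)),
    map (ωSup c) = ωSup (c.map ⟨fun f => map f, fun _ _ h => mono _ _ h⟩)

/-- `s` is a solution of the flat equation morphism `e : X →𝒄 HX + A`:
`s = [α, id] ∘ (Hs + id) ∘ e`. -/
noncomputable def CPOSol (H : CPOFunctor) {A : Type} [OmegaCompletePartialOrder A]
    (α : H.obj (CPOCat.of A) →𝒄 CPOCat.of A) {X : CPOCat}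
    (e : X →𝒄 CPOCat.sum (H.obj X) (CPOCat.of A)) (s : X →𝒄 CPOCat.of A) : Prop :=
  s = (cpoElim (α.comp (H.map s)) ContinuousHom.id).comp e

/-- The map `F : s ↦ [α, id] ∘ (Hs + id) ∘ e` on `CPO(X, A)`. -/
noncomputable def cpoEqFun (H : CPOFunctor) {A : Type} [OmegaCompletePartialOrder A]
    (α : H.obj (CPOCat.of A) →𝒄 CPOCat.of A) {X : CPOCat}
    (e : X →𝒄 CPOCat.sum (H.obj X) (CPOCat.of A)) (s : X →𝒄 CPOCat.of A) :
    X →𝒄 CPOCat.of A :=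
  (cpoElim (α.comp (H.map s)) ContinuousHom.id).comp e

/-- The approximations `e†₀ = const ⊥`, `e†_{n+1} = F (e†_n)`. -/
noncomputable def cpoIter (H : CPOFunctor) {A : Type} [OmegaCompletePartialOrder A]
    [OrderBot A] (α : H.obj (CPOCat.of A) →𝒄 CPOCat.of A) {X : CPOCat}
    (e : X →𝒄 CPOCat.sum (H.obj X) (CPOCat.of A)) : ℕ → (X →𝒄 CPOCat.of A)
  | 0 => ContinuousHom.const (⊥ : A)
  | n + 1 => cpoEqFun H α e (cpoIter H α e n)


theorem cpoEqFun_apply (H : CPOFunctor) {A : Type} [OmegaCompletePartialOrder A]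
    (α : H.obj (CPOCat.of A) →𝒄 CPOCat.of A) {X : CPOCat}
    (e : X →𝒄 CPOCat.sum (H.obj X) (CPOCat.of A)) (s : X →𝒄 CPOCat.of A) (x : X) :
    cpoEqFun H α e s x = Sum.elim (fun y => α (H.map s y)) id (e x) := rfl

theorem cpoIter_succ_apply (H : CPOFunctor) {A : Type} [OmegaCompletePartialOrder A]
    [OrderBot A] (α : H.obj (CPOCat.of A) →𝒄 CPOCat.of A) {X : CPOCat}
    (e : X →𝒄 CPOCat.sum (H.obj X) (CPOCat.of A)) (n : ℕ) (x : X) :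
    cpoIter H α e (n + 1) x
      = Sum.elim (fun y => α (H.map (cpoIter H α e n) y)) id (e x) := rfl

theorem cpoHomωSup_apply {γ δ : Type} [OmegaCompletePartialOrder γ]
    [OmegaCompletePartialOrder δ] (c : Chain (γ →𝒄 δ)) (x : γ) :
    ωSup c x = ωSup (c.map ⟨fun f => f x, fun _ _ h => h x⟩) := rfl

/-- Let `H : CPO → CPO` be locally continuous and `α : HA →𝒄 A` an `H`-algebra
whose carrier has a least element `⊥`.  Then every flat equation morphism
`e : X →𝒄 HX + A` has a least solution `e†`, which is also the least fixed
point of the continuous map `F(s) = [α, id] ∘ (Hs + id) ∘ e` on `CPO(X, A)`,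
and `e† = ⊔_{n<ω} e†_n` where `e†₀ = const ⊥` and `e†_{n+1} = F(e†_n)`. -/
theorem cpo_least_solution (H : CPOFunctor) (A : Type)
    [OmegaCompletePartialOrder A] [OrderBot A]
    (α : H.obj (CPOCat.of A) →𝒄 CPOCat.of A) :
    ∀ (X : CPOCat) (e : X →𝒄 CPOCat.sum (H.obj X) (CPOCat.of A)),
      ∃ s : X →𝒄 CPOCat.of A,
        IsLeast {t | CPOSol H α e t} s ∧
        IsLeast {t | cpoEqFun H α e t = t} s ∧
        ∃ ch : Chain (X →𝒄 CPOCat.of A),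
          (∀ n, ch n = cpoIter H α e n) ∧ s = ωSup ch := by
  intro X e
  -- monotonicity of `F = cpoEqFun H α e`
  have hF : ∀ s t : X →𝒄 CPOCat.of A, s ≤ t → cpoEqFun H α e s ≤ cpoEqFun H α e t := by
    intro s t h x
    show cpoEqFun H α e s x ≤ cpoEqFun H α e t x
    rw [cpoEqFun_apply, cpoEqFun_apply]
    cases he : e x with
    | inl y => exact α.monotone (H.mono s t h y)
    | inr a => exact le_rfl
  -- the chain of iterates
  have hstep : ∀ n, cpoIter H α e n ≤ cpoIter H α e (n + 1) := by
    intro n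
    induction n with
    | zero => intro x; exact @bot_le A _ _ _
    | succ n ih => exact hF _ _ ih
  set ch : Chain (X →𝒄 CPOCat.of A) :=
    ⟨fun n => cpoIter H α e n, monotone_nat_of_le_succ hstep⟩ with hch
  have hchn : ∀ n, ch n = cpoIter H α e n := fun n => rfl
  -- ωSup ch is a fixed point of F
  have hfix : cpoEqFun H α e (ωSup ch) = ωSup ch := by
    apply DFunLike.ext
    intro x
    rw [cpoEqFun_apply]
    cases he : e x with
    | inr a =>
      show a = ωSup ch x
      apply le_antisymm
      · have h1 : cpoIter H α e 1 x = a := by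
          rw [cpoIter_succ_apply, he]; rfl
        exact h1 ▸ (le_ωSup ch 1) x
      · rw [cpoHomωSup_apply]
        apply ωSup_le
        intro n
        show ch n x ≤ a
        cases n with
        | zero => exact @bot_le A _ _ _
        | succ n =>
          have h1 : cpoIter H α e (n + 1) x = a := by
            rw [cpoIter_succ_apply, he]; rfl
          exact le_of_eq h1
    | inl y =>
      show α (H.map (ωSup ch) y) = ωSup ch x
      rw [H.cont ch]
      rw [cpoHomωSup_apply]
      rw [α.continuous]
      apply le_antisymm
      · apply ωSup_le
        intro n
        show α (H.map (ch n) y) ≤ ωSup ch x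
        have h1 : cpoIter H α e (n + 1) x = α (H.map (cpoIter H α e n) y) := by
          rw [cpoIter_succ_apply, he]; rfl
        exact h1 ▸ (le_ωSup ch (n + 1)) x
      · rw [cpoHomωSup_apply]
        apply ωSup_le
        intro n
        show ch n x ≤ _
        have h1 : cpoIter H α e (n + 1) x = α (H.map (cpoIter H α e n) y) := by
          rw [cpoIter_succ_apply, he]; rfl
        calc ch n x ≤ ch (n + 1) x := hstep n x
          _ = α (H.map (ch n) y) := h1
          _ ≤ _ := le_ωSup
            (((ch.map ⟨fun f => H.map f, fun _ _ h => H.mono _ _ h⟩).map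
              ⟨fun f => f y, fun _ _ h => h y⟩).map α.toOrderHom) n
  -- any fixed point is an upper bound of the iterates
  have hlb : ∀ t : X →𝒄 CPOCat.of A, cpoEqFun H α e t = t → ωSup ch ≤ t := by
    intro t ht
    apply ωSup_le
    intro n
    induction n with
    | zero => intro x; exact @bot_le A _ _ _
    | succ n ih => exact le_of_le_of_eq (hF _ _ ih) ht
  refine ⟨ωSup ch, ⟨hfix.symm, ?_⟩, ⟨hfix, fun t ht => hlb t ht⟩, ch, hchn, rfl⟩
  intro t ht
  exact hlb t ht.symm
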